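/- Let u_1, …, u_r be factors of the Thue–Morse word T such that the words φ(u_1), …, φ(u_r) are pairwise Abelian equivalent, where φ maps a_1…a_n to b_1…b_{n−1} with b_i = 1 iff a_i = a_{i+1}. Then the u_i lie in at most 4 distinct 2-Abelian equivalence classes. -/

import Mathlib

/-- Number of occurrences of `x` as a factor of `u`. -/
def occ {α : Type*} [DecidableEq α] (u x : List α) : ℕ :=
  ((List.range (u.length + 1)).filter (fun i => decide (x <+: u.drop i))).length

/-- `k`-Abelian equivalence: same number of occurrences of every word of length at most `k`. -/
def KAbEq {α : Type*} [DecidableEq α] (k : ℕ) (u v : List α) : Prop :=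
  ∀ x : List α, x.length ≤ k → occ u x = occ v x

/-- The factor of the infinite word `w` of length `n` starting at position `i`. -/
def factorAt {α : Type*} (w : ℕ → α) (i n : ℕ) : List α :=
  (List.range n).map (fun j => w (i + j))

/-- `k`-Abelian complexity: the number of `k`-Abelian classes of length-`n` factors of `w`. -/
noncomputable def rho {α : Type*} [DecidableEq α] (k : ℕ) (w : ℕ → α) (n : ℕ) : ℕ :=
  Set.ncard { C : Set (List α) | ∃ i : ℕ,
    C = { v | (∃ j : ℕ, v = factorAt w j n) ∧ KAbEq k v (factorAt w i n) } }

/-- The map `φ`: `b_i = 1` iff `a_i = a_{i+1}`. -/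
def phiL (u : List Bool) : List Bool :=
  List.zipWith (fun a b => decide (a = b)) u u.tail

def cnt (m : ℕ) (p : ℕ → Prop) [DecidablePred p] : ℕ :=
  ((Finset.range m).filter p).card

@[simp] lemma factorAt_zero {α : Type*} (w : ℕ → α) (i : ℕ) : factorAt w i 0 = [] := by
  simp [factorAt]

lemma factorAt_succ {α : Type*} (w : ℕ → α) (i n : ℕ) :
    factorAt w i (n + 1) = w i :: factorAt w (i + 1) n := by
  simp only [factorAt, List.range_succ_eq_map, List.map_cons, List.map_map, Nat.add_zero]
  congr 1
  apply List.map_congr_left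
  intro j _
  simp only [Function.comp]
  congr 1
  omega

@[simp] lemma length_factorAt {α : Type*} (w : ℕ → α) (i n : ℕ) :
    (factorAt w i n).length = n := by simp [factorAt]

lemma phiL_factorAt (T : ℕ → Bool) (i n : ℕ) :
    phiL (factorAt T i n) = factorAt (fun m => decide (T m = T (m + 1))) i (n - 1) := by
  induction n using Nat.twoStepInduction generalizing i with
  | zero => simp [phiL]
  | one => simp [phiL, factorAt_succ]
  | more n _ ih2 =>
    have h2 := ih2 (i + 1)
    simp only [Nat.add_sub_cancel] at h2 ⊢
    have hphi : ∀ (a b : Bool) (l : List Bool),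
        phiL (a :: b :: l) = decide (a = b) :: phiL (b :: l) := fun a b l => rfl
    rw [show n + 2 - 1 = n + 1 from rfl, show n + 2 = (n + 1) + 1 by omega,
      factorAt_succ T i (n+1), factorAt_succ T (i+1) n, hphi,
      ← factorAt_succ T (i+1) n, h2, factorAt_succ (fun m => decide (T m = T (m+1))) i n]

lemma drop_factorAt {α : Type*} (w : ℕ → α) (i n j : ℕ) :
    (factorAt w i n).drop j = factorAt w (i + j) (n - j) := by
  induction j generalizing i n with
  | zero => simp
  | succ j ih =>
    have h1 : (factorAt w i n).drop 1 = factorAt w (i + 1) (n - 1) := by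
      cases n with
      | zero => simp
      | succ n => rw [factorAt_succ]; simp
    rw [show j + 1 = 1 + j by omega, ← List.drop_drop, h1, ih]
    congr 1 <;> omega

lemma single_prefix_factorAt {α : Type*} (w : ℕ → α) (p m : ℕ) (a : α) :
    [a] <+: factorAt w p m ↔ 0 < m ∧ w p = a := by
  cases m with
  | zero => simp
  | succ m => rw [factorAt_succ]; simp [List.cons_prefix_cons, eq_comm]

lemma pair_prefix_factorAt {α : Type*} (w : ℕ → α) (p m : ℕ) (a b : α) :
    [a, b] <+: factorAt w p m ↔ 2 ≤ m ∧ w p = a ∧ w (p + 1) = b := by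
  match m with
  | 0 => simp
  | 1 => rw [factorAt_succ]; simp [List.cons_prefix_cons]
  | (m+2) =>
    rw [factorAt_succ, factorAt_succ]
    simp [List.cons_prefix_cons, eq_comm]
lemma length_filter_range (M : ℕ) (f : ℕ → Bool) :
    ((List.range M).filter f).length = ((Finset.range M).filter (fun j => f j = true)).card := by
  induction M with
  | zero => simp
  | succ M ih =>
    rw [List.range_succ, List.filter_append, List.length_append, ih, Finset.range_add_one,
      Finset.filter_insert]
    by_cases h : f M = true
    · rw [if_pos h]
      rw [Finset.card_insert_of_notMem (by simp)]
      simp [h]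
    · rw [if_neg h]
      simp [h]

lemma occ_nil {α : Type*} [DecidableEq α] (u : List α) : occ u [] = u.length + 1 := by
  simp [occ, List.nil_prefix]

lemma occ_factorAt_single (T : ℕ → Bool) (i n : ℕ) (a : Bool) :
    occ (factorAt T i n) [a] = cnt n (fun j => T (i + j) = a) := by
  unfold occ
  rw [length_factorAt]
  rw [List.filter_congr (l := List.range (n+1))
      (q := fun j => decide (j < n ∧ T (i + j) = a)) ?_]
  · rw [length_filter_range]
    simp only [decide_eq_true_eq]
    unfold cnt
    congr 1
    ext j
    simp only [Finset.mem_filter, Finset.mem_range]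
    constructor
    · rintro ⟨-, h2, h3⟩; exact ⟨h2, h3⟩
    · rintro ⟨h2, h3⟩; exact ⟨by omega, h2, h3⟩
  · intro j hj
    rw [drop_factorAt]
    apply decide_eq_decide.mpr
    rw [single_prefix_factorAt]
    exact and_congr_left' (by omega)

lemma occ_factorAt_pair (T : ℕ → Bool) (i m : ℕ) (a b : Bool) :
    occ (factorAt T i (m + 1)) [a, b] = cnt m (fun j => T (i + j) = a ∧ T (i + j + 1) = b) := by
  unfold occ
  rw [length_factorAt]
  rw [List.filter_congr (l := List.range (m+1+1))
      (q := fun j => decide (j < m ∧ (T (i + j) = a ∧ T (i + j + 1) = b))) ?_]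
  · rw [length_filter_range]
    simp only [decide_eq_true_eq]
    unfold cnt
    congr 1
    ext j
    simp only [Finset.mem_filter, Finset.mem_range]
    constructor
    · rintro ⟨-, h2, h3⟩; exact ⟨h2, h3⟩
    · rintro ⟨h2, h3⟩; exact ⟨by omega, h2, h3⟩
  · intro j hj
    rw [drop_factorAt]
    apply decide_eq_decide.mpr
    rw [pair_prefix_factorAt]
    have harith : i + j + 1 = i + j + 1 := rfl
    constructor
    · rintro ⟨h1, h2, h3⟩; exact ⟨by omega, h2, h3⟩
    · rintro ⟨h1, h2, h3⟩; exact ⟨by omega, h2, h3⟩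

lemma occ_phiL_true (T : ℕ → Bool) (i m : ℕ) :
    occ (phiL (factorAt T i (m + 1))) [true] = cnt m (fun j => T (i + j) = T (i + j + 1)) := by
  rw [phiL_factorAt, Nat.add_sub_cancel, occ_factorAt_single]
  unfold cnt
  congr 1
  ext j
  simp

def chi (b : Bool) : ℤ := if b then 1 else 0

lemma chi_bound (b : Bool) : 0 ≤ chi b ∧ chi b ≤ 1 := by cases b <;> simp [chi]

lemma cnt_cast (m : ℕ) (p : ℕ → Prop) [DecidablePred p] :
    (cnt m p : ℤ) = ∑ j ∈ Finset.range m, (if p j then (1 : ℤ) else 0) := by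
  unfold cnt
  rw [Finset.card_filter]
  push_cast
  rfl

-- W2
lemma winW2 (T : ℕ → Bool) (i m : ℕ) :
    (cnt (m + 1) (fun j => T (i + j) = false) : ℤ) + cnt (m + 1) (fun j => T (i + j) = true)
      = m + 1 := by
  rw [cnt_cast, cnt_cast, ← Finset.sum_add_distrib]
  rw [Finset.sum_congr rfl (g := fun _ => (1 : ℤ)) (fun j _ => by cases h : T (i + j) <;> simp [h])]
  simp

lemma winS (T : ℕ → Bool) (i m : ℕ) :
    (cnt (m + 1) (fun j => T (i + j) = true) : ℤ)
      = ∑ j ∈ Finset.range (m + 1), chi (T (i + j)) := by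
  rw [cnt_cast]
  exact Finset.sum_congr rfl (fun j _ => by cases h : T (i + j) <;> simp [h, chi])

-- W3
lemma winW3 (T : ℕ → Bool) (i m : ℕ) :
    (cnt m (fun j => T (i + j) = false ∧ T (i + j + 1) = false) : ℤ)
      + cnt m (fun j => T (i + j) = false ∧ T (i + j + 1) = true)
      + cnt m (fun j => T (i + j) = true ∧ T (i + j + 1) = false)
      + cnt m (fun j => T (i + j) = true ∧ T (i + j + 1) = true) = m := by
  simp only [cnt_cast, ← Finset.sum_add_distrib]
  rw [Finset.sum_congr rfl (g := fun _ => (1 : ℤ))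
    (fun j _ => by cases h : T (i + j) <;> cases h2 : T (i + j + 1) <;> simp [h, h2])]
  simp

-- W4
lemma winW4 (T : ℕ → Bool) (i m : ℕ) :
    (cnt m (fun j => T (i + j) = true ∧ T (i + j + 1) = true) : ℤ)
      + cnt m (fun j => T (i + j) = false ∧ T (i + j + 1) = false)
      = cnt m (fun j => T (i + j) = T (i + j + 1)) := by
  simp only [cnt_cast, ← Finset.sum_add_distrib]
  exact Finset.sum_congr rfl
    (fun j _ => by cases h : T (i + j) <;> cases h2 : T (i + j + 1) <;> simp [h, h2])

-- W5
lemma winW5 (T : ℕ → Bool) (i m : ℕ) :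
    (cnt m (fun j => T (i + j) = false ∧ T (i + j + 1) = true) : ℤ)
      - cnt m (fun j => T (i + j) = true ∧ T (i + j + 1) = false)
      = chi (T (i + m)) - chi (T i) := by
  simp only [cnt_cast, ← Finset.sum_sub_distrib]
  rw [Finset.sum_congr rfl (g := fun j => chi (T (i + j + 1)) - chi (T (i + j)))
    (fun j _ => by cases h : T (i + j) <;> cases h2 : T (i + j + 1) <;> simp [h, h2, chi])]
  have := Finset.sum_range_sub (fun j => chi (T (i + j))) m
  simpa [Nat.add_assoc] using this

-- W7
lemma winW7 (T : ℕ → Bool) (i m : ℕ) :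
    (cnt m (fun j => T (i + j) = true ∧ T (i + j + 1) = true) : ℤ)
      - cnt m (fun j => T (i + j) = false ∧ T (i + j + 1) = false)
      = 2 * (cnt (m + 1) (fun j => T (i + j) = true) : ℤ)
        - chi (T (i + m)) - chi (T i) - m := by
  simp only [cnt_cast, ← Finset.sum_sub_distrib]
  rw [Finset.sum_congr rfl (g := fun j => chi (T (i + j)) + chi (T (i + j + 1)) - 1)
    (fun j _ => by cases h : T (i + j) <;> cases h2 : T (i + j + 1) <;> simp [h, h2, chi])]
  have hs : (cnt (m + 1) (fun j => T (i + j) = true) : ℤ)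
      = ∑ j ∈ Finset.range (m + 1), chi (T (i + j)) := winS T i m
  have h1 : ∑ j ∈ Finset.range (m + 1), chi (T (i + j))
      = (∑ j ∈ Finset.range m, chi (T (i + j))) + chi (T (i + m)) :=
    Finset.sum_range_succ _ m
  have h2 : ∑ j ∈ Finset.range (m + 1), chi (T (i + j))
      = (∑ j ∈ Finset.range m, chi (T (i + j + 1))) + chi (T (i + 0)) :=
    Finset.sum_range_succ' _ m
  have hs2 : ∑ j ∈ Finset.range (m + 1), (if T (i + j) = true then (1 : ℤ) else 0)
      = ∑ j ∈ Finset.range (m + 1), chi (T (i + j)) :=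
    Finset.sum_congr rfl (fun j _ => by cases h : T (i + j) <;> simp [h, chi])
  simp only [Finset.sum_sub_distrib, Finset.sum_add_distrib, Finset.sum_const,
    Finset.card_range, nsmul_eq_mul, mul_one, Nat.add_zero] at *
  rw [hs2]
  omega

lemma GS_eq (T : ℕ → Bool) (hT0 : T 0 = false) (hTe : ∀ n, T (2 * n) = T n)
    (hTo : ∀ n, T (2 * n + 1) = !T n) :
    ∀ x, (∑ p ∈ Finset.range x,
        (chi (T p && T (p + 1)) - chi (!T p && !T (p + 1)))) = chi (T (x / 2)) := by
  intro x
  induction x with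
  | zero => simp [hT0, chi]
  | succ x ih =>
    rw [Finset.sum_range_succ, ih]
    rcases Nat.even_or_odd x with ⟨k, hk⟩ | ⟨k, hk⟩
    · have hx : x = 2 * k := by omega
      have e1 : T x = T k := by rw [hx]; exact hTe k
      have e2 : T (x + 1) = !T k := by rw [hx]; exact hTo k
      have e3 : x / 2 = k := by omega
      have e4 : (x + 1) / 2 = k := by omega
      rw [e1, e2, e3, e4]
      cases h : T k <;> simp [h, chi]
    · have e1 : T x = !T k := by rw [hk]; exact hTo k
      have e2 : T (x + 1) = T (k + 1) := by
        rw [show x + 1 = 2 * (k + 1) by omega]; exact hTe (k + 1)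
      have e3 : x / 2 = k := by omega
      have e4 : (x + 1) / 2 = k + 1 := by omega
      rw [e1, e2, e3, e4]
      cases h : T k <;> cases h2 : T (k + 1) <;> simp [h, h2, chi]

lemma sum_shift (g : ℕ → ℤ) (i : ℕ) : ∀ m, ∑ j ∈ Finset.range m, g (i + j)
    = (∑ p ∈ Finset.range (i + m), g p) - ∑ p ∈ Finset.range i, g p := by
  intro m
  induction m with
  | zero => simp
  | succ m ih =>
    rw [Finset.sum_range_succ, ih, show i + (m + 1) = (i + m) + 1 by omega,
      Finset.sum_range_succ]
    ring

-- W6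
lemma winW6 (T : ℕ → Bool) (hT0 : T 0 = false) (hTe : ∀ n, T (2 * n) = T n)
    (hTo : ∀ n, T (2 * n + 1) = !T n) (i m : ℕ) :
    (cnt m (fun j => T (i + j) = true ∧ T (i + j + 1) = true) : ℤ)
      - cnt m (fun j => T (i + j) = false ∧ T (i + j + 1) = false)
      = chi (T ((i + m) / 2)) - chi (T (i / 2)) := by
  simp only [cnt_cast, ← Finset.sum_sub_distrib]
  rw [Finset.sum_congr rfl
    (g := fun j => chi (T (i + j) && T (i + j + 1)) - chi (!T (i + j) && !T (i + j + 1)))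
    (fun j _ => by cases h : T (i + j) <;> cases h2 : T (i + j + 1) <;> simp [h, h2, chi])]
  rw [sum_shift (fun p => chi (T p && T (p + 1)) - chi (!T p && !T (p + 1))) i m]
  rw [GS_eq T hT0 hTe hTo, GS_eq T hT0 hTe hTo]

lemma core (T : ℕ → Bool) (hT0 : T 0 = false) (hTe : ∀ n, T (2 * n) = T n)
    (hTo : ∀ n, T (2 * n + 1) = !T n) (m i i' : ℕ)
    (hK : cnt m (fun j => T (i + j) = T (i + j + 1))
        = cnt m (fun j => T (i' + j) = T (i' + j + 1)))
    (hf : T i = T i') (hB : T ((i + m) / 2) = T ((i' + m) / 2)) :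
    ∀ x : List Bool, x.length ≤ 2 →
      occ (factorAt T i (m + 1)) x = occ (factorAt T i' (m + 1)) x := by
  have H2 := winW2 T i m
  have H2' := winW2 T i' m
  have H3 := winW3 T i m
  have H3' := winW3 T i' m
  have H4 := winW4 T i m
  have H4' := winW4 T i' m
  have H5 := winW5 T i m
  have H5' := winW5 T i' m
  have H7 := winW7 T i m
  have H7' := winW7 T i' m
  have H6 := winW6 T hT0 hTe hTo i m
  have H6' := winW6 T hT0 hTe hTo i' m
  have hKz : (cnt m (fun j => T (i + j) = T (i + j + 1)) : ℤ)
      = cnt m (fun j => T (i' + j) = T (i' + j + 1)) := by exact_mod_cast hK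
  have hfz : chi (T i) = chi (T i') := by rw [hf]
  have hBz : chi (T ((i + m) / 2)) = chi (T ((i' + m) / 2)) := by rw [hB]
  obtain ⟨b1, b2⟩ := chi_bound (T (i + m))
  obtain ⟨b3, b4⟩ := chi_bound (T i)
  obtain ⟨b5, b6⟩ := chi_bound (T (i / 2))
  obtain ⟨b7, b8⟩ := chi_bound (T ((i + m) / 2))
  obtain ⟨c1, c2⟩ := chi_bound (T (i' + m))
  obtain ⟨c3, c4⟩ := chi_bound (T i')
  obtain ⟨c5, c6⟩ := chi_bound (T (i' / 2))
  obtain ⟨c7, c8⟩ := chi_bound (T ((i' + m) / 2))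
  have key : cnt (m + 1) (fun j => T (i + j) = true) = cnt (m + 1) (fun j => T (i' + j) = true)
      ∧ cnt (m + 1) (fun j => T (i + j) = false) = cnt (m + 1) (fun j => T (i' + j) = false)
      ∧ cnt m (fun j => T (i + j) = false ∧ T (i + j + 1) = false)
        = cnt m (fun j => T (i' + j) = false ∧ T (i' + j + 1) = false)
      ∧ cnt m (fun j => T (i + j) = false ∧ T (i + j + 1) = true)
        = cnt m (fun j => T (i' + j) = false ∧ T (i' + j + 1) = true)
      ∧ cnt m (fun j => T (i + j) = true ∧ T (i + j + 1) = false)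
        = cnt m (fun j => T (i' + j) = true ∧ T (i' + j + 1) = false)
      ∧ cnt m (fun j => T (i + j) = true ∧ T (i + j + 1) = true)
        = cnt m (fun j => T (i' + j) = true ∧ T (i' + j + 1) = true) := by
    omega
  obtain ⟨k1, k2, k3, k4, k5, k6⟩ := key
  intro x hx
  rcases x with _ | ⟨a, _ | ⟨b, _ | ⟨c, t⟩⟩⟩
  · rw [occ_nil, occ_nil]; simp
  · rw [occ_factorAt_single, occ_factorAt_single]
    cases a
    · exact k2
    · exact k1
  · rw [occ_factorAt_pair, occ_factorAt_pair]
    cases a <;> cases b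
    · exact k3
    · exact k4
    · exact k5
    · exact k6
  · simp at hx


lemma phiL_length (w : List Bool) : (phiL w).length = w.length - 1 := by
  simp [phiL]

lemma cover {r : ℕ} (u : Fin r → List Bool) (c : Fin r → Bool × Bool)
    (hc : ∀ j j', c j = c j' → KAbEq 2 (u j) (u j')) :
    ∃ s : Finset (Fin r), s.card ≤ 4 ∧ ∀ j, ∃ j' ∈ s, KAbEq 2 (u j) (u j') := by
  rcases isEmpty_or_nonempty (Fin r) with he | hne
  · exact ⟨∅, by simp, fun j => (he.false j).elim⟩
  · classical
    let g : Bool × Bool → Fin r :=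
      fun v => if h : ∃ j, c j = v then h.choose else Classical.arbitrary _
    refine ⟨Finset.image g Finset.univ, ?_, ?_⟩
    · refine (Finset.card_image_le).trans ?_
      simp [Finset.card_univ]
    · intro j
      have hex : ∃ j', c j' = c j := ⟨j, rfl⟩
      refine ⟨g (c j), Finset.mem_image_of_mem g (Finset.mem_univ _), ?_⟩
      have hg : g (c j) = hex.choose := dif_pos hex
      have h2 : c (g (c j)) = c j := by rw [hg]; exact hex.choose_spec
      exact hc j _ h2.symm

lemma small_words (w : List Bool) (h : w.length ≤ 1) : w = [] ∨ w = [false] ∨ w = [true] := by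
  rcases w with _ | ⟨a, _ | ⟨b, t⟩⟩
  · left; rfl
  · cases a
    · right; left; rfl
    · right; right; rfl
  · simp at h

theorem stmt12 (T : ℕ → Bool)
    (hT0 : T 0 = false) (hTe : ∀ n, T (2 * n) = T n) (hTo : ∀ n, T (2 * n + 1) = !T n)
    (r : ℕ) (u : Fin r → List Bool)
    (hfac : ∀ j, ∃ i, u j = factorAt T i (u j).length)
    (habel : ∀ j j', KAbEq 1 (phiL (u j)) (phiL (u j'))) :
    ∃ s : Finset (Fin r), s.card ≤ 4 ∧ ∀ j, ∃ j' ∈ s, KAbEq 2 (u j) (u j') := by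
  classical
  choose iF hiF using hfac
  by_cases hsmall : ∀ j, (u j).length ≤ 1
  · apply cover u (fun j => (decide (u j = []), decide (u j = [true])))
    intro j j' hcc
    have h1 := small_words _ (hsmall j)
    have h2 := small_words _ (hsmall j')
    have heq : u j = u j' := by
      rcases h1 with h | h | h <;> rcases h2 with h' | h' | h' <;> simp [h, h'] at hcc ⊢
    intro x hx
    rw [heq]
  · push_neg at hsmall
    obtain ⟨j0, hj0⟩ := hsmall
    set m := (u j0).length - 1 with hm
    have hN2 : 2 ≤ (u j0).length := hj0
    have hlen : ∀ j, (u j).length = m + 1 := by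
      intro j
      have h := habel j j0 [] (by simp)
      rw [occ_nil, occ_nil] at h
      have l1 : (phiL (u j)).length = (u j).length - 1 := phiL_length _
      have l2 : (phiL (u j0)).length = (u j0).length - 1 := phiL_length _
      omega
    apply cover u (fun j => (T (iF j), T ((iF j + m) / 2)))
    intro j j' hcc
    have hu : u j = factorAt T (iF j) (m + 1) := by rw [← hlen j]; exact hiF j
    have hu' : u j' = factorAt T (iF j') (m + 1) := by rw [← hlen j']; exact hiF j'
    have hKj : occ (phiL (u j)) [true] = occ (phiL (u j')) [true] :=
      habel j j' [true] (by simp)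
    rw [hu, hu', occ_phiL_true, occ_phiL_true] at hKj
    have hf : T (iF j) = T (iF j') := congrArg Prod.fst hcc
    have hB : T ((iF j + m) / 2) = T ((iF j' + m) / 2) := congrArg Prod.snd hcc
    intro x hx
    rw [hu, hu']
    exact core T hT0 hTe hTo m (iF j) (iF j') hKj hf hB x hx
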